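/- If w ∈ ℂ satisfies 3w⁴ + 1 = 0, then w ∉ {0, 1, −1}, and the number z = (w² − 1/3)/(w(w² − 1)) satisfies z¹² = −1/27; in particular |z| = 3^{−1/4}. -/

import Mathlib

theorem branch_points_modulus (w : ℂ) (h : 3 * w ^ 4 + 1 = 0) :
    w ≠ 0 ∧ w ≠ 1 ∧ w ≠ -1 ∧
    ((w ^ 2 - 1 / 3) / (w * (w ^ 2 - 1))) ^ 12 = -1 / 27 ∧
    ‖(w ^ 2 - 1 / 3) / (w * (w ^ 2 - 1))‖ = (3 : ℝ) ^ (-(1 / 4) : ℝ) := by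
  have hw0 : w ≠ 0 := by rintro rfl; norm_num at h
  have hw1 : w ≠ 1 := by rintro rfl; norm_num at h
  have hwm1 : w ≠ -1 := by rintro rfl; norm_num at h
  have hd : w * (w ^ 2 - 1) ≠ 0 := by
    intro hz
    rcases mul_eq_zero.1 hz with h1 | h2
    · exact hw0 h1
    · have : w ^ 4 = 1 := by
        have : w ^ 2 = 1 := by linear_combination h2
        linear_combination (w ^ 2 + 1) * this
      rw [this] at h; norm_num at h
  have key : 27 * (w ^ 2 - 1 / 3) ^ 12 + (w * (w ^ 2 - 1)) ^ 12 = 0 := by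
    linear_combination ((1/3)*w^32 + (-4)*w^30 + (197/9)*w^28 + (-72)*w^26 +
      (4258/27)*w^24 + (-240)*w^22 + (21419/81)*w^20 + (-220)*w^18 +
      (34714/243)*w^16 + (-220/3)*w^14 + (21419/729)*w^12 + (-80/9)*w^10 +
      (4258/2187)*w^8 + (-8/27)*w^6 + (197/6561)*w^4 + (-4/2187)*w^2 + (1/19683)) * h
  have hz12 : ((w ^ 2 - 1 / 3) / (w * (w ^ 2 - 1))) ^ 12 = -1 / 27 := by
    rw [div_pow, div_eq_div_iff (pow_ne_zero _ hd) (by norm_num)]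
    linear_combination key
  refine ⟨hw0, hw1, hwm1, hz12, ?_⟩
  set z := (w ^ 2 - 1 / 3) / (w * (w ^ 2 - 1)) with hzdef
  have habs : ‖z‖ ^ 12 = 1 / 27 := by
    rw [← norm_pow, hz12]
    simp [norm_div]
  have h3 : ((3 : ℝ) ^ (-(1 / 4) : ℝ)) ^ 12 = 1 / 27 := by
    rw [← Real.rpow_natCast ((3:ℝ) ^ (-(1/4):ℝ)) 12, ← Real.rpow_mul (by norm_num)]
    norm_num
  have h1 : 0 ≤ ‖z‖ := norm_nonneg z
  have h2 : 0 ≤ (3 : ℝ) ^ (-(1 / 4) : ℝ) := Real.rpow_nonneg (by norm_num) _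
  have heq : ‖z‖ ^ 12 = ((3 : ℝ) ^ (-(1 / 4) : ℝ)) ^ 12 := by rw [habs, h3]
  exact (pow_left_strictMonoOn₀ (by norm_num : (12:ℕ) ≠ 0)).injOn h1 h2 heq
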